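/- arXiv:2404.08316 — 2 statements merged into one kernel-verified Lean document; each statement's English description precedes it below -/
import Mathlib

section
/- (Flow invariance of the probability simplex, proved inside Lemma B.3.) Let S ≥ 1, T > 0 and let A : [0,T] × ℝ^S → ℝ^{S×S} be bounded, Borel measurable in t, Lipschitz continuous in x uniformly in t, and such that A(t,x) is a conservative intensity matrix (nonnegative off-diagonal entries, zero row sums) for every (t,x). If μ : [0,T] → ℝ^S is absolutely continuous, μ(0) ∈ 𝒫(𝕊), and μ(t) = μ(0) + ∫_0^t A(s,μ(s))^T μ(s) ds for all t ∈ [0,T], then μ(t) ∈ 𝒫(𝕊) for all t ∈ [0,T]. -/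
open MeasureTheory

/-- The probability simplex in `ℝ^S`. -/
def simplex (S : ℕ) : Set (Fin S → ℝ) :=
  {m | (∀ i, 0 ≤ m i) ∧ ∑ i, m i = 1}

/-- `f` is absolutely continuous on the interval `[a,b]`. -/
def AbsContOn {E : Type*} [NormedAddCommGroup E] (f : ℝ → E) (a b : ℝ) : Prop :=
  ∀ ε > (0 : ℝ), ∃ δ > (0 : ℝ), ∀ (N : ℕ) (c d : Fin N → ℝ),
    (∀ k, a ≤ c k ∧ c k ≤ d k ∧ d k ≤ b) →
    (∀ k l, k ≠ l → Set.Ioo (c k) (d k) ∩ Set.Ioo (c l) (d l) = ∅) →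
    ∑ k, (d k - c k) < δ → ∑ k, ‖f (d k) - f (c k)‖ < ε

section aux
open Set intervalIntegral

lemma exp_integral' (L a b : ℝ) :
    ∫ s in a..b, L * Real.exp (L*s) = Real.exp (L*b) - Real.exp (L*a) := by
  have hd : ∀ s ∈ Set.uIcc a b, HasDerivAt (fun s => Real.exp (L*s)) (L * Real.exp (L*s)) s := by
    intro s _
    have := ((hasDerivAt_id s).const_mul L).exp
    simpa [mul_comm] using this
  exact integral_eq_sub_of_hasDerivAt hd
    ((continuous_const.mul (Real.continuous_exp.comp
      (continuous_const.mul continuous_id))).intervalIntegrable _ _)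

lemma fubini_step' (g : ℝ → ℝ) (L t : ℝ) (ht : 0 ≤ t)
    (hg : IntervalIntegrable g volume 0 t) :
    (∫ s in (0:ℝ)..t, L * Real.exp (L*s) * (∫ u in (0:ℝ)..s, g u))
      = Real.exp (L*t) * (∫ u in (0:ℝ)..t, g u) - ∫ u in (0:ℝ)..t, Real.exp (L*u) * g u := by
  have hg' : IntegrableOn g (Ioc 0 t) volume := by
    rwa [intervalIntegrable_iff_integrableOn_Ioc_of_le ht] at hg
  set ν := volume.restrict (Ioc (0:ℝ) t) with hν
  set F : ℝ × ℝ → ℝ :=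
    ({p : ℝ × ℝ | p.2 ≤ p.1}).indicator (fun p => L * Real.exp (L*p.1) * g p.2) with hF
  have hMeasSet : MeasurableSet {p : ℝ × ℝ | p.2 ≤ p.1} :=
    (isClosed_le continuous_snd continuous_fst).measurableSet
  have hcontexp : Continuous fun s : ℝ => L * Real.exp (L*s) :=
    continuous_const.mul (Real.continuous_exp.comp (continuous_const.mul continuous_id))
  have hFint : Integrable F (ν.prod ν) := by
    apply Integrable.indicator _ hMeasSet
    exact (hcontexp.integrableOn_Ioc).mul_prod hg'
  have swap : (∫ s, (∫ u, F (s, u) ∂ν) ∂ν) = ∫ u, (∫ s, F (s, u) ∂ν) ∂ν :=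
    integral_integral_swap hFint
  have lhs_eq : (∫ s in (0:ℝ)..t, L * Real.exp (L*s) * (∫ u in (0:ℝ)..s, g u))
      = ∫ s, (∫ u, F (s, u) ∂ν) ∂ν := by
    rw [integral_of_le ht]
    apply setIntegral_congr_fun measurableSet_Ioc
    intro s hs
    have h1 : ∀ u : ℝ, F (s, u) = (Iic s).indicator (fun u => L * Real.exp (L*s) * g u) u := by
      intro u
      by_cases h : u ≤ s <;> simp [hF, Set.indicator_apply, h]
    calc L * Real.exp (L*s) * (∫ u in (0:ℝ)..s, g u)
        = ∫ u in Ioc (0:ℝ) s, L * Real.exp (L*s) * g u := by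
          rw [integral_of_le hs.1.le, ← MeasureTheory.integral_const_mul]
      _ = ∫ u in Ioc (0:ℝ) t ∩ Iic s, L * Real.exp (L*s) * g u := by
          congr 1
          rw [Set.Ioc_inter_Iic, min_eq_right hs.2]
      _ = ∫ u, F (s, u) ∂ν := by
          rw [hν, ← setIntegral_indicator measurableSet_Iic]
          exact setIntegral_congr_fun measurableSet_Ioc (fun u _ => (h1 u).symm) |>.symm
  have rhs_eq : (∫ u, (∫ s, F (s, u) ∂ν) ∂ν)
      = Real.exp (L*t) * (∫ u in (0:ℝ)..t, g u) - ∫ u in (0:ℝ)..t, Real.exp (L*u) * g u := by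
    have step1 : (∫ u, (∫ s, F (s, u) ∂ν) ∂ν)
        = ∫ u in Ioc (0:ℝ) t, (Real.exp (L*t) - Real.exp (L*u)) * g u := by
      apply setIntegral_congr_fun measurableSet_Ioc
      intro u hu
      have h1 : ∀ s : ℝ, F (s, u) = (Ici u).indicator (fun s => L * Real.exp (L*s) * g u) s := by
        intro s
        by_cases h : u ≤ s <;> simp [hF, Set.indicator_apply, h]
      calc (∫ s, F (s, u) ∂ν)
          = ∫ s in Ioc (0:ℝ) t ∩ Ici u, L * Real.exp (L*s) * g u := by
            rw [hν, ← setIntegral_indicator measurableSet_Ici]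
            exact setIntegral_congr_fun measurableSet_Ioc (fun s _ => h1 s)
        _ = ∫ s in Icc u t, L * Real.exp (L*s) * g u := by
            have hset : Ioc (0:ℝ) t ∩ Ici u = Icc u t := by
              ext s
              simp only [Set.mem_inter_iff, Set.mem_Ioc, Set.mem_Ici, Set.mem_Icc]
              constructor
              · rintro ⟨⟨_, hst⟩, hus⟩; exact ⟨hus, hst⟩
              · rintro ⟨hus, hst⟩; exact ⟨⟨lt_of_lt_of_le hu.1 hus, hst⟩, hus⟩
            rw [hset]
        _ = (Real.exp (L*t) - Real.exp (L*u)) * g u := by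
            rw [integral_Icc_eq_integral_Ioc, ← integral_of_le hu.2, ← exp_integral' L u t,
              ← intervalIntegral.integral_mul_const]
    rw [step1, ← integral_of_le ht]
    have i1 : IntervalIntegrable (fun u => Real.exp (L*t) * g u) volume 0 t := hg.const_mul _
    have i2 : IntervalIntegrable (fun u => Real.exp (L*u) * g u) volume 0 t :=
      hg.continuousOn_mul
        (Real.continuous_exp.comp (continuous_const.mul continuous_id)).continuousOn
    calc (∫ u in (0:ℝ)..t, (Real.exp (L*t) - Real.exp (L*u)) * g u)
        = ∫ u in (0:ℝ)..t, (Real.exp (L*t) * g u - Real.exp (L*u) * g u) := by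
          apply intervalIntegral.integral_congr
          intro u _
          ring
      _ = (∫ u in (0:ℝ)..t, Real.exp (L*t) * g u) - ∫ u in (0:ℝ)..t, Real.exp (L*u) * g u :=
          intervalIntegral.integral_sub i1 i2
      _ = Real.exp (L*t) * (∫ u in (0:ℝ)..t, g u) - ∫ u in (0:ℝ)..t, Real.exp (L*u) * g u := by
          rw [intervalIntegral.integral_const_mul]
  rw [lhs_eq, swap, rhs_eq]

lemma ibp_exp' (g : ℝ → ℝ) (c L t : ℝ) (ht : 0 ≤ t)
    (hg : IntervalIntegrable g volume 0 t) :
    Real.exp (L*t) * (c + ∫ s in (0:ℝ)..t, g s)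
      = c + ∫ s in (0:ℝ)..t, Real.exp (L*s) * (L * (c + ∫ u in (0:ℝ)..s, g u) + g s) := by
  have hexp : Continuous fun s : ℝ => Real.exp (L*s) :=
    Real.continuous_exp.comp (continuous_const.mul continuous_id)
  have hGcont : ContinuousOn (fun s => ∫ u in (0:ℝ)..s, g u) (Set.uIcc 0 t) :=
    intervalIntegral.continuousOn_primitive_interval' hg Set.left_mem_uIcc
  have i1 : IntervalIntegrable (fun s => L * Real.exp (L*s) * c) volume 0 t :=
    ((continuous_const.mul hexp).mul continuous_const).intervalIntegrable _ _
  have i2 : IntervalIntegrable (fun s => L * Real.exp (L*s) * (∫ u in (0:ℝ)..s, g u)) volume 0 t :=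
    ((continuous_const.mul hexp).continuousOn.mul hGcont).intervalIntegrable
  have i3 : IntervalIntegrable (fun s => Real.exp (L*s) * g s) volume 0 t :=
    hg.continuousOn_mul hexp.continuousOn
  have expand : (∫ s in (0:ℝ)..t, Real.exp (L*s) * (L * (c + ∫ u in (0:ℝ)..s, g u) + g s))
      = (∫ s in (0:ℝ)..t, L * Real.exp (L*s) * c)
        + ((∫ s in (0:ℝ)..t, L * Real.exp (L*s) * (∫ u in (0:ℝ)..s, g u))
        + ∫ s in (0:ℝ)..t, Real.exp (L*s) * g s) := by
    rw [← intervalIntegral.integral_add i2 i3, ← intervalIntegral.integral_add i1 (i2.add i3)]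
    apply intervalIntegral.integral_congr
    intro s _
    ring
  rw [expand, fubini_step' g L t ht hg]
  have e1 : (∫ s in (0:ℝ)..t, L * Real.exp (L*s) * c) = (Real.exp (L*t) - 1) * c := by
    rw [intervalIntegral.integral_mul_const, exp_integral']
    simp
  rw [e1]
  ring

lemma gronwall_zero' (V : ℝ → ℝ) (hV : Continuous V) (hVnn : ∀ s, 0 ≤ V s) (K T : ℝ)
    (hK : 0 ≤ K)
    (hle : ∀ t ∈ Set.Icc (0:ℝ) T, V t ≤ K * ∫ s in (0:ℝ)..t, V s) :
    ∀ t ∈ Set.Icc (0:ℝ) T, V t = 0 := by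
  intro t ht
  set P : ℝ → ℝ := fun u => ∫ s in (0:ℝ)..u, V s with hPdef
  have hP : ∀ x : ℝ, HasDerivAt P (V x) x :=
    fun x => (hV.integral_hasStrictDerivAt 0 x).hasDerivAt
  have hΦd : ∀ x : ℝ, HasDerivAt (fun u => Real.exp (-K*u) * P u)
      (Real.exp (-K*x) * (V x - K * P x)) x := by
    intro x
    have h1 : HasDerivAt (fun u : ℝ => Real.exp (-K*u)) (Real.exp (-K*x) * (-K)) x := by
      simpa using ((hasDerivAt_id x).const_mul (-K)).exp
    have h2 := h1.mul (hP x)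
    exact h2.congr_deriv (by ring)
  have hPcont : Continuous P := continuous_iff_continuousAt.mpr fun x => (hP x).continuousAt
  have anti : AntitoneOn (fun u => Real.exp (-K*u) * P u) (Set.Icc 0 T) := by
    apply antitoneOn_of_deriv_nonpos (convex_Icc 0 T)
    · exact ((Real.continuous_exp.comp
        (continuous_const.mul continuous_id)).mul hPcont).continuousOn
    · intro x _
      exact (hΦd x).differentiableAt.differentiableWithinAt
    · intro x hx
      rw [(hΦd x).deriv]
      rw [interior_Icc] at hx
      have hlex := hle x ⟨hx.1.le, hx.2.le⟩
      have h0 : (0:ℝ) ≤ Real.exp (-K*x) := (Real.exp_pos _).le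
      nlinarith [mul_nonneg h0 (sub_nonneg.mpr hlex)]
  have h1 := anti (Set.left_mem_Icc.mpr (ht.1.trans ht.2)) ht ht.1
  have hP0 : P 0 = 0 := intervalIntegral.integral_same
  have hPt : P t ≤ 0 := by
    simp only [hP0, mul_zero] at h1
    have hpos := Real.exp_pos (-K*t)
    nlinarith
  have hKP : K * P t ≤ 0 := mul_nonpos_of_nonneg_of_nonpos hK hPt
  linarith [hle t ht, hVnn t]

end aux

/-- **Flow invariance of the probability simplex** (inside Lemma B.3). -/
theorem simplex_flow_invariant (S : ℕ) (hS : 1 ≤ S) (T : ℝ) (hT : 0 < T)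
    (A : ℝ → (Fin S → ℝ) → Fin S → Fin S → ℝ)
    (Abdd : ∃ Cb : ℝ, ∀ t x i j, |A t x i j| ≤ Cb)
    (Ameas : ∀ x, Measurable fun t => A t x)
    (Alip : ∃ L : NNReal, ∀ t, LipschitzWith L (A t))
    (Aoff : ∀ t x i j, i ≠ j → 0 ≤ A t x i j)
    (Arow : ∀ t x i, ∑ j, A t x i j = 0)
    (μ : ℝ → Fin S → ℝ)
    (hAC : AbsContOn μ 0 T)
    (h0 : μ 0 ∈ simplex S)
    (heq : ∀ t ∈ Set.Icc (0 : ℝ) T, ∀ i,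
      IntervalIntegrable (fun s => ∑ j, μ s j * A s (μ s) j i) volume 0 t ∧
      μ t i = μ 0 i + ∫ s in (0 : ℝ)..t, ∑ j, μ s j * A s (μ s) j i) :
    ∀ t ∈ Set.Icc (0 : ℝ) T, μ t ∈ simplex S := by
  classical
  obtain ⟨Cb₀, hCb₀⟩ := Abdd
  set Cb : ℝ := max Cb₀ 0 with hCbdef
  have hCb : ∀ t x i j, |A t x i j| ≤ Cb := fun t x i j => (hCb₀ t x i j).trans (le_max_left _ _)
  have hCbnn : (0:ℝ) ≤ Cb := le_max_right _ _
  set g : Fin S → ℝ → ℝ := fun i s => ∑ j, μ s j * A s (μ s) j i with hgdef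
  have hTmem : T ∈ Set.Icc (0:ℝ) T := ⟨hT.le, le_rfl⟩
  have hgint : ∀ i, IntervalIntegrable (g i) volume 0 T := fun i => (heq T hTmem i).1
  have hμeq : ∀ t ∈ Set.Icc (0:ℝ) T, ∀ i, μ t i = μ 0 i + ∫ s in (0:ℝ)..t, g i s :=
    fun t ht i => (heq t ht i).2
  have hexpc : Continuous fun s : ℝ => Real.exp (Cb*s) :=
    Real.continuous_exp.comp (continuous_const.mul continuous_id)
  -- continuity of μ on [0,T]
  have hμcont : ∀ i, ContinuousOn (fun t => μ t i) (Set.Icc 0 T) := by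
    intro i
    have h1 : ContinuousOn (fun t => μ 0 i + ∫ s in (0:ℝ)..t, g i s) (Set.Icc 0 T) := by
      apply ContinuousOn.add continuousOn_const
      have := intervalIntegral.continuousOn_primitive_interval' (hgint i) Set.left_mem_uIcc
      rwa [Set.uIcc_of_le hT.le] at this
    exact h1.congr (fun t ht => hμeq t ht i)
  -- Part 1 : sum of coordinates is 1
  have hsum : ∀ t ∈ Set.Icc (0:ℝ) T, ∑ i, μ t i = 1 := by
    intro t ht
    have h1 : ∑ i, μ t i = ∑ i, (μ 0 i + ∫ s in (0:ℝ)..t, g i s) :=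
      Finset.sum_congr rfl (fun i _ => hμeq t ht i)
    have h2 : ∑ i, ∫ s in (0:ℝ)..t, g i s = ∫ s in (0:ℝ)..t, ∑ i, g i s :=
      (intervalIntegral.integral_finset_sum (fun i _ => (heq t ht i).1)).symm
    have h3 : ∀ s : ℝ, ∑ i, g i s = 0 := by
      intro s
      rw [hgdef]
      simp only
      rw [Finset.sum_comm]
      simp [← Finset.mul_sum, Arow]
    rw [h1, Finset.sum_add_distrib, h0.2, h2]
    simp [h3]
  -- Part 2 : nonnegativity
  set π : ℝ → ℝ := fun t => max 0 (min t T) with hπdef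
  have hπcont : Continuous π := continuous_const.max (continuous_id.min continuous_const)
  have hπmem : ∀ t, π t ∈ Set.Icc (0:ℝ) T :=
    fun t => ⟨le_max_left _ _, max_le hT.le (min_le_right _ _)⟩
  have hπid : ∀ t ∈ Set.Icc (0:ℝ) T, π t = t := by
    intro t ht
    rw [hπdef]
    simp only
    rw [min_eq_left ht.2, max_eq_right ht.1]
  set ν : Fin S → ℝ → ℝ := fun i s => Real.exp (Cb * s) * μ s i with hνdef
  set V : ℝ → ℝ := fun t => ∑ i, max 0 (-(ν i (π t))) with hVdef
  have hVt : ∀ t ∈ Set.Icc (0:ℝ) T, V t = ∑ i, max 0 (-(ν i t)) := by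
    intro t ht
    rw [hVdef]
    simp only [hπid t ht]
  have hVcont : Continuous V := by
    apply continuous_finset_sum
    intro i _
    apply continuous_const.max
    apply Continuous.neg
    have hνc : ContinuousOn (ν i) (Set.Icc 0 T) := hexpc.continuousOn.mul (hμcont i)
    exact hνc.comp_continuous hπcont hπmem
  have hVnn : ∀ s, 0 ≤ V s := fun s => Finset.sum_nonneg (fun i _ => le_max_left _ _)
  -- key estimate
  have key : ∀ t ∈ Set.Icc (0:ℝ) T, ∀ i,
      max 0 (-(ν i t)) ≤ ∫ s in (0:ℝ)..t, (2*Cb) * V s := by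
    intro t ht i
    have hgt : IntervalIntegrable (g i) volume 0 t := (heq t ht i).1
    have hicc : Set.uIcc (0:ℝ) t = Set.Icc 0 t := Set.uIcc_of_le ht.1
    have hsub : Set.Icc (0:ℝ) t ⊆ Set.Icc 0 T := Set.Icc_subset_Icc le_rfl ht.2
    set H : ℝ → ℝ := fun s => Real.exp (Cb*s) * (Cb * μ s i) + Real.exp (Cb*s) * g i s
      with hHdef
    have hνeq : ν i t = μ 0 i + ∫ s in (0:ℝ)..t, H s := by
      have h1 := ibp_exp' (g i) (μ 0 i) Cb t ht.1 hgt
      rw [hνdef]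
      simp only
      rw [hμeq t ht i, h1]
      congr 1
      apply intervalIntegral.integral_congr
      intro s hs
      have hs' : s ∈ Set.Icc (0:ℝ) T := hsub (hicc ▸ hs)
      rw [hHdef]
      simp only
      rw [← hμeq s hs' i]
      ring
    have Hint : IntervalIntegrable H volume 0 t := by
      apply IntervalIntegrable.add
      · apply ContinuousOn.intervalIntegrable
        exact hexpc.continuousOn.mul
          (continuousOn_const.mul ((hμcont i).mono (hicc ▸ hsub)))
      · exact hgt.continuousOn_mul hexpc.continuousOn
    have Vint : IntervalIntegrable (fun s => -(2*Cb) * V s) volume 0 t :=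
      (hVcont.intervalIntegrable _ _).const_mul _
    -- pointwise lower bound for H
    have hpt : ∀ s ∈ Set.Icc (0:ℝ) t, -(2*Cb) * V s ≤ H s := by
      intro s hs
      have hs' : s ∈ Set.Icc (0:ℝ) T := hsub hs
      have hHsum : H s = ∑ j, (ν j s) * (A s (μ s) j i + if j = i then Cb else 0) := by
        have h1 : ∑ j, (ν j s) * (A s (μ s) j i + if j = i then Cb else 0)
            = (∑ j, ν j s * A s (μ s) j i) + ν i s * Cb := by
          simp only [mul_add, Finset.sum_add_distrib, mul_ite, mul_zero]
          congr 1
          simp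
        have h2 : H s = (∑ j, ν j s * A s (μ s) j i) + ν i s * Cb := by
          have h3 : (∑ j, ν j s * A s (μ s) j i) = Real.exp (Cb*s) * g i s := by
            rw [hgdef, hνdef]
            simp only [Finset.mul_sum]
            apply Finset.sum_congr rfl
            intro j _
            ring
          rw [h3, hHdef, hνdef]
          ring
        rw [h2, h1]
      have hterm : ∀ j, -(2*Cb) * max 0 (-(ν j s))
          ≤ (ν j s) * (A s (μ s) j i + if j = i then Cb else 0) := by
        intro j
        set B : ℝ := A s (μ s) j i + (if j = i then Cb else 0) with hBdef
        have hB0 : 0 ≤ B := by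
          rw [hBdef]
          by_cases h : j = i
          · subst h
            rw [if_pos rfl]
            have := neg_abs_le (A s (μ s) j j)
            have := hCb s (μ s) j j
            linarith
          · simp only [h, if_false, add_zero]
            exact Aoff s (μ s) j i h
        have hB2 : B ≤ 2*Cb := by
          have h1 : A s (μ s) j i ≤ Cb := (le_abs_self _).trans (hCb s (μ s) j i)
          rw [hBdef]
          by_cases h : j = i
          · subst h
            rw [if_pos rfl]
            linarith
          · simp only [h, if_false, add_zero]
            linarith
        have hm0 : 0 ≤ max 0 (-(ν j s)) := le_max_left _ _
        have hxm : -(max 0 (-(ν j s))) ≤ ν j s := by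
          rcases le_total 0 (ν j s) with h | h
          · have : (0:ℝ) ≤ max 0 (-(ν j s)) := hm0
            linarith
          · rw [max_eq_right (neg_nonneg.mpr h)]
            simp
        nlinarith [mul_nonneg (by linarith : (0:ℝ) ≤ ν j s + max 0 (-(ν j s))) hB0,
          mul_nonneg hm0 (by linarith : (0:ℝ) ≤ 2*Cb - B)]
      calc -(2*Cb) * V s = ∑ j, -(2*Cb) * max 0 (-(ν j s)) := by
            rw [hVt s hs', Finset.mul_sum]
        _ ≤ ∑ j, (ν j s) * (A s (μ s) j i + if j = i then Cb else 0) :=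
            Finset.sum_le_sum (fun j _ => hterm j)
        _ = H s := hHsum.symm
    have hmono : (∫ s in (0:ℝ)..t, -(2*Cb) * V s) ≤ ∫ s in (0:ℝ)..t, H s := by
      apply intervalIntegral.integral_mono_on ht.1 Vint Hint hpt
    have hneg : (∫ s in (0:ℝ)..t, -(2*Cb) * V s) = -∫ s in (0:ℝ)..t, (2*Cb) * V s := by
      rw [← intervalIntegral.integral_neg]
      apply intervalIntegral.integral_congr
      intro s _
      ring
    have hIVnn : 0 ≤ ∫ s in (0:ℝ)..t, (2*Cb) * V s := by
      apply intervalIntegral.integral_nonneg ht.1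
      intro s _
      exact mul_nonneg (by linarith) (hVnn s)
    have hμ0i : 0 ≤ μ 0 i := h0.1 i
    rw [hneg] at hmono
    apply max_le hIVnn
    rw [hνeq]
    linarith
  -- Gronwall
  have hgron : ∀ t ∈ Set.Icc (0:ℝ) T, V t ≤ (2*Cb*S) * ∫ s in (0:ℝ)..t, V s := by
    intro t ht
    rw [hVt t ht]
    calc ∑ i, max 0 (-(ν i t)) ≤ ∑ _i : Fin S, ∫ s in (0:ℝ)..t, (2*Cb) * V s :=
          Finset.sum_le_sum (fun i _ => key t ht i)
      _ = (S : ℝ) * ∫ s in (0:ℝ)..t, (2*Cb) * V s := by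
          rw [Finset.sum_const, Finset.card_univ, Fintype.card_fin, nsmul_eq_mul]
      _ = (2*Cb*S) * ∫ s in (0:ℝ)..t, V s := by
          rw [intervalIntegral.integral_const_mul]
          ring
  have hVzero := gronwall_zero' V hVcont hVnn (2*Cb*S) T (by positivity) hgron
  -- conclusion
  intro t ht
  refine ⟨?_, hsum t ht⟩
  intro i
  have hz := hVzero t ht
  rw [hVt t ht] at hz
  have hterm0 : max 0 (-(ν i t)) = 0 := by
    have := Finset.sum_eq_zero_iff_of_nonneg
      (fun j (_ : j ∈ Finset.univ) => le_max_left (0:ℝ) (-(ν j t)))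
    exact (this.mp hz) i (Finset.mem_univ i)
  have hν0 : 0 ≤ ν i t := by
    by_contra h
    push_neg at h
    have : max 0 (-(ν i t)) = -(ν i t) := max_eq_right (by linarith)
    rw [this] at hterm0
    linarith
  have hexp : 0 < Real.exp (Cb * t) := Real.exp_pos _
  rw [hνdef] at hν0
  simp only at hν0
  exact nonneg_of_mul_nonneg_right hν0 hexp
end

section
/- (A priori bound depending on the number of shocks, proved inside Lemma B.2.) Let the model data satisfy the Lipschitz assumptions, let μ ∈ M, and let v be a regular solution of (E1) and (E3). Then for every u ∈ 𝕌 and every t with (t,u) ∈ TS, ‖v(t,u)‖ ≤ (Ψmax + ψmax T) · exp((Qmax + λmax)T) · Σ_{i=0}^{n−Z(u)} ( exp((Qmax + λmax)T) · λmax · T )^i. -/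
open MeasureTheory
open scoped BigOperators Classical

namespace MFGShocks

/-- The probability simplex `𝒫(𝕊)` in `ℝ^S`. -/
def simplex (S : ℕ) : Set (Fin S → ℝ) :=
  {m | (∀ i, 0 ≤ m i) ∧ ∑ i, m i = 1}

/-- Membership in the parameter set `𝕌`: for some `k ≤ n`, the first `k` coordinates are
increasing and lie in `[0,T]` and the remaining coordinates equal `-1`. -/
def memU (n : ℕ) (T : ℝ) (u : Fin n → ℝ) : Prop :=
  ∃ k ≤ n, (∀ i : Fin n, (i : ℕ) < k → u i ∈ Set.Icc (0 : ℝ) T) ∧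
    (∀ i j : Fin n, (j : ℕ) < k → i ≤ j → u i ≤ u j) ∧
    (∀ i : Fin n, k ≤ (i : ℕ) → u i = -1)

/-- `Z(u)`: the number of coordinates of `u` different from `-1`, i.e.\ the number of
shocks recorded in `u`. -/
noncomputable def Zu {n : ℕ} (u : Fin n → ℝ) : ℕ :=
  (Finset.univ.filter fun i => u i ≠ -1).card

/-- Membership `(t,u) ∈ TS`. -/
def memTS (n : ℕ) (T : ℝ) (t : ℝ) (u : Fin n → ℝ) : Prop :=
  memU n T u ∧ t ∈ Set.Icc (0 : ℝ) T ∧ ∀ i, u i ≤ t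

/-- `→(u,t)`: record a new shock at time `t` (replace coordinate `Z(u)+1` of `u` by `t`). -/
noncomputable def push {n : ℕ} (u : Fin n → ℝ) (t : ℝ) : Fin n → ℝ :=
  fun i => if (i : ℕ) = Zu u then t else u i

/-- `←u`: delete the last shock (replace coordinate `Z(u)` of `u` by `-1`). -/
noncomputable def pop {n : ℕ} (u : Fin n → ℝ) : Fin n → ℝ :=
  fun i => if (i : ℕ) + 1 = Zu u then -1 else u i

/-- `t_u = u^{Z(u)}`: the time of the last shock recorded in `u` (`0` if there is none). -/
noncomputable def lastTime {n : ℕ} (u : Fin n → ℝ) : ℝ :=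
  if h : Zu u - 1 < n then u ⟨Zu u - 1, h⟩ else 0

/-- The left endpoint of the time interval associated with the parameter `u`:
`t_u` if `u` records at least one shock, and `0` otherwise. -/
noncomputable def startTime {n : ℕ} (u : Fin n → ℝ) : ℝ :=
  if Zu u = 0 then 0 else lastTime u

/-- `f` is absolutely continuous on the interval `[a,b]`. -/
def AbsContOn {E : Type*} [NormedAddCommGroup E] (f : ℝ → E) (a b : ℝ) : Prop :=
  ∀ ε > (0 : ℝ), ∃ δ > (0 : ℝ), ∀ (N : ℕ) (c d : Fin N → ℝ),
    (∀ k, a ≤ c k ∧ c k ≤ d k ∧ d k ≤ b) →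
    (∀ k l, k ≠ l → Set.Ioo (c k) (d k) ∩ Set.Ioo (c l) (d l) = ∅) →
    ∑ k, (d k - c k) < δ → ∑ k, ‖f (d k) - f (c k)‖ < ε

/-- A function `f : TS → ℝ^S` is regular if `f(·,u)` is absolutely continuous on
`[max_k u^k, T]` (intersected with `[0,T]`) for every `u ∈ 𝕌`. -/
def Regular (S n : ℕ) (T : ℝ) (f : ℝ → (Fin n → ℝ) → Fin S → ℝ) : Prop :=
  ∀ u : Fin n → ℝ, memU n T u → AbsContOn (fun t => f t u) (startTime u) T

/-- The model data: reduced-form running reward `ψ̂`, reduced-form intensity matrix `Q̂`,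
shock intensities `λ`, terminal reward `Ψ`, relocation map `J` (independent of the
distribution) and initial distribution `m₀`. -/
structure Model (S n : ℕ) where
  psi : ℝ → (Fin n → ℝ) → (Fin S → ℝ) → (Fin S → ℝ) → Fin S → ℝ
  Q : ℝ → (Fin n → ℝ) → (Fin S → ℝ) → (Fin S → ℝ) → Fin S → Fin S → ℝ
  lam : ℕ → ℝ → (Fin S → ℝ) → ℝ
  Psi : ℕ → (Fin S → ℝ) → Fin S → ℝ
  J : ℝ → Fin S → Fin S
  m0 : Fin S → ℝ

/-- The standing (boundedness, measurability, intensity-matrix and Lipschitz) assumptions on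
the model data, together with the constants `Ψmax, ψmax, Qmax, λmax, Jmax` bounding the data
and the Lipschitz constants `L_ψ̂, L_Q̂, L_Ψ, L_λ`.  Throughout, `ℝ^S` carries the maximum
norm and the matrix norm is the compatible induced one (maximal absolute row sum). -/
structure Hyps (S n : ℕ) (T : ℝ) (D : Model S n)
    (Lpsi LQ LPsi Llam Psimax psimax Qmax lammax : ℝ) (Jmax : ℕ) : Prop where
  hS : 1 ≤ S
  hn : 1 ≤ n
  hT : 0 < T
  hm0 : D.m0 ∈ simplex S
  hLpsi : 0 < Lpsi
  hLQ : 0 < LQ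
  hLPsi : 0 < LPsi
  hLlam : 0 < Llam
  psi_meas : Measurable fun p : ℝ × (Fin n → ℝ) × (Fin S → ℝ) × (Fin S → ℝ) =>
    D.psi p.1 p.2.1 p.2.2.1 p.2.2.2
  Q_meas : Measurable fun p : ℝ × (Fin n → ℝ) × (Fin S → ℝ) × (Fin S → ℝ) =>
    D.Q p.1 p.2.1 p.2.2.1 p.2.2.2
  lam_meas : ∀ k, Measurable fun p : ℝ × (Fin S → ℝ) => D.lam k p.1 p.2
  Psi_meas : ∀ k, Measurable (D.Psi k)
  J_meas : Measurable D.J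
  psi_bdd : ∀ t u m v, memTS n T t u → m ∈ simplex S → ∀ i, |D.psi t u m v i| ≤ psimax
  Q_bdd : ∀ t u m v, memTS n T t u → m ∈ simplex S → ∀ i, ∑ j, |D.Q t u m v i j| ≤ Qmax
  Q_offdiag : ∀ t u m v i j, i ≠ j → 0 ≤ D.Q t u m v i j
  Q_rowsum : ∀ t u m v i, ∑ j, D.Q t u m v i j = 0
  lam_pos : ∀ k, 1 ≤ k → k ≤ n → ∀ t ∈ Set.Icc (0 : ℝ) T, ∀ m ∈ simplex S,
    0 < D.lam k t m
  lam_bdd : ∀ k, 1 ≤ k → k ≤ n → ∀ t ∈ Set.Icc (0 : ℝ) T, ∀ m ∈ simplex S,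
    D.lam k t m ≤ lammax
  Psi_bdd : ∀ k ≤ n, ∀ m ∈ simplex S, ∀ i, |D.Psi k m i| ≤ Psimax
  psi_lip : ∀ t u, memTS n T t u → ∀ m₁ ∈ simplex S, ∀ m₂ ∈ simplex S,
    ∀ v₁ v₂ : Fin S → ℝ, ∀ i,
      |D.psi t u m₁ v₁ i - D.psi t u m₂ v₂ i| ≤ Lpsi * (‖m₁ - m₂‖ + ‖v₁ - v₂‖)
  Q_lip : ∀ t u, memTS n T t u → ∀ m₁ ∈ simplex S, ∀ m₂ ∈ simplex S,
    ∀ v₁ v₂ : Fin S → ℝ, ∀ i,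
      ∑ j, |D.Q t u m₁ v₁ i j - D.Q t u m₂ v₂ i j| ≤ LQ * (‖m₁ - m₂‖ + ‖v₁ - v₂‖)
  Psi_lip : ∀ k ≤ n, ∀ m₁ ∈ simplex S, ∀ m₂ ∈ simplex S,
    ‖D.Psi k m₁ - D.Psi k m₂‖ ≤ LPsi * ‖m₁ - m₂‖
  lam_lip : ∀ k, 1 ≤ k → k ≤ n → ∀ t ∈ Set.Icc (0 : ℝ) T, ∀ m₁ ∈ simplex S, ∀ m₂ ∈ simplex S,
    |D.lam k t m₁ - D.lam k t m₂| ≤ Llam * ‖m₁ - m₂‖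
  J_bdd : ∀ t ∈ Set.Icc (0 : ℝ) T, ∀ j : Fin S,
    (Finset.univ.filter fun i => D.J t i = j).card ≤ Jmax

/-- The constant `v_max`. -/
noncomputable def vmaxC (n : ℕ) (T Psimax psimax Qmax lammax : ℝ) : ℝ :=
  (Psimax + psimax * T) * Real.exp ((Qmax + lammax) * T) *
    ∑ i ∈ Finset.range (n + 1), (Real.exp ((Qmax + lammax) * T) * lammax * T) ^ i

/-- The constant `K₁ = L_ψ̂ + L_Q̂ v_max + 2 v_max L_λ`. -/
noncomputable def K1C (n : ℕ) (T Lpsi LQ Llam Psimax psimax Qmax lammax : ℝ) : ℝ :=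
  Lpsi + LQ * vmaxC n T Psimax psimax Qmax lammax +
    2 * vmaxC n T Psimax psimax Qmax lammax * Llam

/-- The constant `K₂ = L_ψ̂ + v_max L_Q̂ + Qmax + λmax`. -/
noncomputable def K2C (n : ℕ) (T Lpsi LQ Psimax psimax Qmax lammax : ℝ) : ℝ :=
  Lpsi + vmaxC n T Psimax psimax Qmax lammax * LQ + Qmax + lammax

/-- The right-hand side of the backward equation (E1), written for the integral
(Carathéodory) formulation `v(t,u) = Ψ(Z(u),μ(T,u)) + ∫_t^T (E1rhs)(s) ds`. -/
noncomputable def E1rhs {S n : ℕ} (D : Model S n)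
    (μ v : ℝ → (Fin n → ℝ) → Fin S → ℝ) (u : Fin n → ℝ) (i : Fin S) (s : ℝ) : ℝ :=
  D.psi s u (μ s u) (v s u) i + (∑ j, D.Q s u (μ s u) (v s u) i j * v s u j) +
    (if Zu u < n then
      D.lam (Zu u + 1) s (μ s u) * (v s (push u s) (D.J s i) - v s u i)
    else 0)

/-- `v` is a (Carathéodory) solution of the backward equation (E1) with terminal
condition (E3), given the flow `μ`. -/
def SolBackward (S n : ℕ) (T : ℝ) (D : Model S n)
    (μ v : ℝ → (Fin n → ℝ) → Fin S → ℝ) : Prop :=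
  ∀ u : Fin n → ℝ, memU n T u →
    (∀ i : Fin S, v T u i = D.Psi (Zu u) (μ T u) i) ∧
    ∀ t : ℝ, memTS n T t u → ∀ i : Fin S,
      IntervalIntegrable (E1rhs D μ v u i) volume t T ∧
      v t u i = D.Psi (Zu u) (μ T u) i + ∫ s in t..T, E1rhs D μ v u i s

/-- The right-hand side of the forward equation (E2). -/
noncomputable def E2rhs {S n : ℕ} (D : Model S n)
    (v μ : ℝ → (Fin n → ℝ) → Fin S → ℝ) (u : Fin n → ℝ) (i : Fin S) (s : ℝ) : ℝ :=
  ∑ j, μ s u j * D.Q s u (μ s u) (v s u) j i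

/-- `μ` is a (Carathéodory) solution of the forward equation (E2) with initial
condition (E4) and consistency conditions (E5), given the value function `v`. -/
def SolForward (S n : ℕ) (T : ℝ) (D : Model S n)
    (v μ : ℝ → (Fin n → ℝ) → Fin S → ℝ) : Prop :=
  (∀ i, μ 0 (fun _ => (-1 : ℝ)) i = D.m0 i) ∧
  (∀ u : Fin n → ℝ, memU n T u → 1 ≤ Zu u → ∀ j : Fin S,
    μ (lastTime u) u j =
      ∑ i, if D.J (lastTime u) i = j then μ (lastTime u) (pop u) i else 0) ∧
  (∀ u : Fin n → ℝ, memU n T u → ∀ t : ℝ, memTS n T t u → ∀ i : Fin S,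
    IntervalIntegrable (E2rhs D v μ u i) volume (startTime u) t ∧
    μ t u i = μ (startTime u) u i + ∫ s in (startTime u)..t, E2rhs D v μ u i s)

/-- Membership in `M`: a `𝒫(𝕊)`-valued function on `TS` that is `Qmax`-Lipschitz in time. -/
def MemM (S n : ℕ) (T Qmax : ℝ) (μ : ℝ → (Fin n → ℝ) → Fin S → ℝ) : Prop :=
  (∀ t u, memTS n T t u → μ t u ∈ simplex S) ∧
  ∀ u : Fin n → ℝ, memU n T u → ∀ t₁ t₂ : ℝ, memTS n T t₁ u → memTS n T t₂ u →
    ‖μ t₁ u - μ t₂ u‖ ≤ Qmax * |t₁ - t₂|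

/-- Membership in `V`: a regular function on `TS` bounded by `v_max` in supremum norm. -/
def MemV (S n : ℕ) (T vmaxVal : ℝ) (v : ℝ → (Fin n → ℝ) → Fin S → ℝ) : Prop :=
  Regular S n T v ∧ ∀ t u, memTS n T t u → ‖v t u‖ ≤ vmaxVal

/-- The supremum norm over `TS` of a function `f : TS → ℝ^S`. -/
noncomputable def supTS (S n : ℕ) (T : ℝ) (f : ℝ → (Fin n → ℝ) → Fin S → ℝ) : ℝ :=
  sSup {r : ℝ | ∃ t u, memTS n T t u ∧ r = ‖f t u‖}

end MFGShocks


namespace MFGShocks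

section Aux

open Set

private lemma card_filter_lt_fin (n k : ℕ) (hk : k ≤ n) :
    (Finset.univ.filter fun i : Fin n => (i : ℕ) < k).card = k := by
  apply Finset.card_eq_of_bijective (fun i hi => (⟨i, lt_of_lt_of_le hi hk⟩ : Fin n))
  · intro a ha
    simp only [Finset.mem_filter, Finset.mem_univ, true_and] at ha
    exact ⟨a, ha, rfl⟩
  · intro i hi
    simp only [Finset.mem_filter, Finset.mem_univ, true_and]
    exact hi
  · intro i j hi hj h
    simpa [Fin.mk.injEq] using h

private lemma Zu_eq_of_memU {n : ℕ} {T : ℝ} {u : Fin n → ℝ} {k : ℕ} (hk : k ≤ n)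
    (h1 : ∀ i : Fin n, (i : ℕ) < k → u i ∈ Set.Icc (0 : ℝ) T)
    (h3 : ∀ i : Fin n, k ≤ (i : ℕ) → u i = -1) : Zu u = k := by
  unfold Zu
  have hset : (Finset.univ.filter fun i : Fin n => u i ≠ -1)
      = Finset.univ.filter fun i : Fin n => (i : ℕ) < k := by
    ext i
    simp only [Finset.mem_filter, Finset.mem_univ, true_and]
    constructor
    · intro hne
      by_contra hlt
      exact hne (h3 i (not_lt.1 hlt))
    · intro hlt he
      have := (h1 i hlt).1
      rw [he] at this
      linarith
  rw [hset, card_filter_lt_fin n k hk]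

private lemma Zu_le {n : ℕ} (u : Fin n → ℝ) : Zu u ≤ n := by
  exact (Finset.card_filter_le _ _).trans (Finset.card_fin n).le

private lemma memTS_mono {n : ℕ} {T t s : ℝ} {u : Fin n → ℝ}
    (h : memTS n T t u) (hts : t ≤ s) (hsT : s ≤ T) : memTS n T s u :=
  ⟨h.1, ⟨h.2.1.1.trans hts, hsT⟩, fun i => (h.2.2 i).trans hts⟩

private lemma memTS_push {n : ℕ} {T t s : ℝ} {u : Fin n → ℝ}
    (h : memTS n T t u) (hZ : Zu u < n) (hts : t ≤ s) (hsT : s ≤ T) :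
    memTS n T s (push u s) ∧ Zu (push u s) = Zu u + 1 := by
  obtain ⟨⟨k, hk, h1, h2, h3⟩, ⟨ht0, htT⟩, hle⟩ := h
  have hkZ : Zu u = k := Zu_eq_of_memU hk h1 h3
  have hs0 : (0 : ℝ) ≤ s := ht0.trans hts
  have hp1 : ∀ i : Fin n, (i : ℕ) < k + 1 → push u s i ∈ Set.Icc (0 : ℝ) T := by
    intro i hi
    by_cases hik : (i : ℕ) = Zu u
    · simp only [push, hik, if_pos rfl]
      exact ⟨hs0, hsT⟩
    · simp only [push, hik, if_neg hik]
      exact h1 i (by omega)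
  have hp3 : ∀ i : Fin n, k + 1 ≤ (i : ℕ) → push u s i = -1 := by
    intro i hi
    have hik : (i : ℕ) ≠ Zu u := by omega
    simp only [push, if_neg hik]
    exact h3 i (by omega)
  have hZp : Zu (push u s) = k + 1 := by
    apply Zu_eq_of_memU (by omega) hp1 hp3
  have hple : ∀ i, push u s i ≤ s := by
    intro i
    by_cases hik : (i : ℕ) = Zu u
    · simp only [push, if_pos hik]
      exact le_rfl
    · simp only [push, if_neg hik]
      exact (hle i).trans hts
  refine ⟨⟨⟨k + 1, by omega, hp1, ?_, hp3⟩, ⟨hs0, hsT⟩, hple⟩, by rw [hZp, hkZ]⟩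
  intro i j hj hij
  by_cases hjk : (j : ℕ) = Zu u
  · simp only [push, if_pos hjk]
    exact hple i
  · have hj' : (j : ℕ) < k := by omega
    have hik : (i : ℕ) ≠ Zu u := by omega
    simp only [push, if_neg hik, if_neg hjk]
    exact h2 i j hj' hij

/-- Integral-form backward Gronwall inequality. -/
private lemma gronwall_back {g : ℝ → ℝ} {t T A K : ℝ} (htT : t ≤ T) (hK : 0 ≤ K)
    (hg : ContinuousOn g (Set.Icc t T))
    (hineq : ∀ s ∈ Set.Icc t T, g s ≤ A + ∫ r in s..T, K * g r) :
    g t ≤ A * Real.exp (K * (T - t)) := by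
  have hgi : IntegrableOn g (Set.Icc t T) := hg.integrableOn_Icc
  set F : ℝ → ℝ := fun s => ∫ r in t..s, g r with hFdef
  have hint : ∀ s ∈ Set.Icc t T, IntervalIntegrable g volume t s := by
    intro s hs
    apply (hgi.mono_set ?_).intervalIntegrable
    rw [Set.uIcc_of_le hs.1]
    exact Set.Icc_subset_Icc le_rfl hs.2
  have hintT : IntervalIntegrable g volume t T := hint T ⟨htT, le_rfl⟩
  have hKg : ∀ s ∈ Set.Icc t T, ∫ r in s..T, K * g r = K * (F T - F s) := by
    intro s hs
    rw [intervalIntegral.integral_const_mul, ← intervalIntegral.integral_interval_sub_left hintT (hint s hs)]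
  set φ : ℝ → ℝ := fun s => (A + K * (F T - F s)) * Real.exp (K * s) with hφdef
  have hFc : ContinuousOn F (Set.Icc t T) := by
    have h2 := intervalIntegral.continuousOn_primitive_interval (μ := volume) (f := g)
      (a := t) (b := T) (by rwa [Set.uIcc_of_le htT])
    rwa [Set.uIcc_of_le htT] at h2
  have hφc : ContinuousOn φ (Set.Icc t T) :=
    (continuousOn_const.add (continuousOn_const.mul (continuousOn_const.sub hFc))).mul
      ((Real.continuous_exp.comp (continuous_const.mul continuous_id)).continuousOn)
  have hder : ∀ s ∈ Set.Ioo t T, HasDerivAt φ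
      ((K * (A + K * (F T - F s) - g s)) * Real.exp (K * s)) s := by
    intro s hs
    have hcs : ContinuousAt g s := hg.continuousAt (Icc_mem_nhds hs.1 hs.2)
    have hF' : HasDerivAt F (g s) s :=
      intervalIntegral.integral_hasDerivAt_right (hint s ⟨hs.1.le, hs.2.le⟩)
        (ContinuousOn.stronglyMeasurableAtFilter isOpen_Ioo (hg.mono Set.Ioo_subset_Icc_self) s hs)
        hcs
    have h1 : HasDerivAt (fun s => A + K * (F T - F s)) (K * -g s) s :=
      ((hF'.const_sub (F T)).const_mul K).const_add A
    have hKs : HasDerivAt (fun s : ℝ => K * s) K s := by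
      simpa using (hasDerivAt_id s).const_mul K
    have h2 : HasDerivAt (fun s => Real.exp (K * s)) (Real.exp (K * s) * K) s := hKs.exp
    have h3 := h1.mul h2
    rw [show (K * (A + K * (F T - F s) - g s)) * Real.exp (K * s) = K * -g s * Real.exp (K * s) + (A + K * (F T - F s)) * (Real.exp (K * s) * K) by ring]
    exact h3
  have hmono : MonotoneOn φ (Set.Icc t T) := by
    apply monotoneOn_of_deriv_nonneg (convex_Icc t T) hφc
    · intro s hs
      rw [interior_Icc] at hs
      exact (hder s hs).differentiableAt.differentiableWithinAt
    · intro s hs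
      rw [interior_Icc] at hs
      rw [(hder s hs).deriv]
      have hmem : s ∈ Set.Icc t T := ⟨hs.1.le, hs.2.le⟩
      have h1 : g s ≤ A + K * (F T - F s) := by
        have h2 := hineq s hmem
        rwa [hKg s hmem] at h2
      have h4 := (Real.exp_pos (K * s)).le
      have h5 : 0 ≤ K * (A + K * (F T - F s) - g s) :=
        mul_nonneg hK (sub_nonneg.2 h1)
      exact mul_nonneg h5 h4
  have hφtT : φ t ≤ φ T := hmono ⟨le_rfl, htT⟩ ⟨htT, le_rfl⟩ htT
  have hgt : g t ≤ A + K * (F T - F t) := by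
    have h2 := hineq t ⟨le_rfl, htT⟩
    rwa [hKg t ⟨le_rfl, htT⟩] at h2
  have hexp : (0 : ℝ) < Real.exp (K * t) := Real.exp_pos _
  have key : A + K * (F T - F t) ≤ A * Real.exp (K * (T - t)) := by
    have h' : (A + K * (F T - F t)) * Real.exp (K * t) ≤ A * Real.exp (K * T) := by
      have hφT : φ T = A * Real.exp (K * T) := by simp [hφdef]
      rw [← hφT]
      exact hφtT
    have heq : A * Real.exp (K * (T - t)) = A * Real.exp (K * T) / Real.exp (K * t) := by
      rw [mul_sub, Real.exp_sub]
      ring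
    rw [heq, le_div_iff₀ hexp]
    exact h'
  exact hgt.trans key

end Aux

/-- The main Gronwall step: a bound on `‖v(t,u)‖` given a uniform bound `B` on the
value function after one more shock. -/
private lemma step_bound (S n : ℕ) (T : ℝ) (D : Model S n)
    (Lpsi LQ LPsi Llam Psimax psimax Qmax lammax : ℝ) (Jmax : ℕ)
    (H : Hyps S n T D Lpsi LQ LPsi Llam Psimax psimax Qmax lammax Jmax)
    (μ : ℝ → (Fin n → ℝ) → Fin S → ℝ) (hμ : MemM S n T Qmax μ)
    (v : ℝ → (Fin n → ℝ) → Fin S → ℝ) (hsol : SolBackward S n T D μ v)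
    (hpsi0 : 0 ≤ psimax) (hPsi0 : 0 ≤ Psimax) (hQ0 : 0 ≤ Qmax) (hlam0 : 0 ≤ lammax)
    (u : Fin n → ℝ) (t : ℝ) (hts : memTS n T t u) (B : ℝ) (hB : 0 ≤ B)
    (hpush : Zu u < n → ∀ s, t ≤ s → s ≤ T → ‖v s (push u s)‖ ≤ B) :
    ‖v t u‖ ≤ (Psimax + psimax * T + lammax * B * T) * Real.exp ((Qmax + lammax) * T) := by
  have hu : memU n T u := hts.1
  have ht0 : (0 : ℝ) ≤ t := hts.2.1.1
  have htT : t ≤ T := hts.2.1.2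
  set K : ℝ := Qmax + lammax with hKdef
  set c : ℝ := psimax + lammax * B with hcdef
  set A : ℝ := Psimax + psimax * T + lammax * B * T with hAdef
  have hK0 : 0 ≤ K := add_nonneg hQ0 hlam0
  have hc0 : 0 ≤ c := add_nonneg hpsi0 (mul_nonneg hlam0 hB)
  have hA0 : 0 ≤ A := by
    have : 0 ≤ lammax * B * T := mul_nonneg (mul_nonneg hlam0 hB) (ht0.trans htT)
    have h2 : 0 ≤ psimax * T := mul_nonneg hpsi0 (ht0.trans htT)
    simp only [hAdef]
    linarith
  have hmem : ∀ s ∈ Set.Icc t T, memTS n T s u := fun s hs => memTS_mono hts hs.1 hs.2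
  have hint : ∀ (i : Fin S), ∀ s ∈ Set.Icc t T, IntervalIntegrable (E1rhs D μ v u i) volume s T :=
    fun i s hs => ((hsol u hu).2 s (hmem s hs) i).1
  have hval : ∀ (i : Fin S), ∀ s ∈ Set.Icc t T,
      v s u i = D.Psi (Zu u) (μ T u) i + ∫ r in s..T, E1rhs D μ v u i r :=
    fun i s hs => ((hsol u hu).2 s (hmem s hs) i).2
  set g : ℝ → ℝ := fun s => ‖v s u‖ with hgdef
  have hg0 : ∀ s, 0 ≤ g s := fun s => norm_nonneg _
  have hcont_i : ∀ i : Fin S, ContinuousOn (fun s => v s u i) (Set.Icc t T) := by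
    intro i
    have hIcc : IntegrableOn (E1rhs D μ v u i) (Set.Icc t T) :=
      (intervalIntegrable_iff_integrableOn_Icc_of_le htT).1 (hint i t ⟨le_rfl, htT⟩)
    have hprim : ContinuousOn (fun s => ∫ r in t..s, E1rhs D μ v u i r) (Set.Icc t T) := by
      have h2 := intervalIntegral.continuousOn_primitive_interval (μ := volume)
        (f := E1rhs D μ v u i) (a := t) (b := T) (by rwa [Set.uIcc_of_le htT])
      rwa [Set.uIcc_of_le htT] at h2
    apply ContinuousOn.congr
      (f := fun s => (D.Psi (Zu u) (μ T u) i + ∫ r in t..T, E1rhs D μ v u i r)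
        - ∫ r in t..s, E1rhs D μ v u i r)
      (continuousOn_const.sub hprim)
    intro s hs
    have h3 : IntervalIntegrable (E1rhs D μ v u i) volume t s := by
      apply (hint i t ⟨le_rfl, htT⟩).mono_set
      rw [Set.uIcc_of_le hs.1, Set.uIcc_of_le htT]
      exact Set.Icc_subset_Icc le_rfl hs.2
    have h4 := intervalIntegral.integral_interval_sub_left (hint i t ⟨le_rfl, htT⟩) h3
    simp only [hval i s hs, ← h4]
    ring
  have hgc : ContinuousOn g (Set.Icc t T) := by
    have h5 : ContinuousOn (fun s => v s u) (Set.Icc t T) := continuousOn_pi.2 hcont_i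
    exact h5.norm
  have hfb : ∀ (i : Fin S), ∀ r ∈ Set.Icc t T, |E1rhs D μ v u i r| ≤ c + K * g r := by
    intro i r hr
    have hmr := hmem r hr
    have hsimp : μ r u ∈ simplex S := hμ.1 r u hmr
    have h1 : |D.psi r u (μ r u) (v r u) i| ≤ psimax := H.psi_bdd r u _ _ hmr hsimp i
    have hvj : ∀ j, |v r u j| ≤ g r := fun j => by
      have h6 := norm_le_pi_norm (v r u) j
      rwa [Real.norm_eq_abs] at h6
    have h2 : |∑ j, D.Q r u (μ r u) (v r u) i j * v r u j| ≤ Qmax * g r := by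
      calc |∑ j, D.Q r u (μ r u) (v r u) i j * v r u j|
          ≤ ∑ j, |D.Q r u (μ r u) (v r u) i j * v r u j| := Finset.abs_sum_le_sum_abs _ _
        _ ≤ ∑ j, |D.Q r u (μ r u) (v r u) i j| * g r := by
            apply Finset.sum_le_sum
            intro j _
            rw [abs_mul]
            exact mul_le_mul_of_nonneg_left (hvj j) (abs_nonneg _)
        _ = (∑ j, |D.Q r u (μ r u) (v r u) i j|) * g r := by rw [Finset.sum_mul]
        _ ≤ Qmax * g r := mul_le_mul_of_nonneg_right (H.Q_bdd r u _ _ hmr hsimp i) (hg0 r)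
    have h3 : |(if Zu u < n then
        D.lam (Zu u + 1) r (μ r u) * (v r (push u r) (D.J r i) - v r u i) else 0)|
        ≤ lammax * (B + g r) := by
      split_ifs with hZ
      · have hone : 1 ≤ Zu u + 1 := Nat.succ_le_succ (Nat.zero_le _)
        have hr0T : r ∈ Set.Icc (0 : ℝ) T := hmr.2.1
        have hlam_pos := H.lam_pos (Zu u + 1) hone hZ r hr0T (μ r u) hsimp
        have hlam_le := H.lam_bdd (Zu u + 1) hone hZ r hr0T (μ r u) hsimp
        have hvp : |v r (push u r) (D.J r i)| ≤ B := by
          have h5 := norm_le_pi_norm (v r (push u r)) (D.J r i)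
          rw [Real.norm_eq_abs] at h5
          exact h5.trans (hpush hZ r hr.1 hr.2)
        rw [abs_mul, abs_of_pos hlam_pos]
        have h7 : |v r (push u r) (D.J r i) - v r u i| ≤ B + g r :=
          (abs_sub _ _).trans (add_le_add hvp (hvj i))
        exact mul_le_mul hlam_le h7 (abs_nonneg _) hlam0
      · rw [abs_zero]
        exact mul_nonneg hlam0 (add_nonneg hB (hg0 r))
    have habc : |E1rhs D μ v u i r| ≤ psimax + Qmax * g r + lammax * (B + g r) := by
      unfold E1rhs
      exact ((abs_add_le _ _).trans (add_le_add (abs_add_le _ _) le_rfl)).trans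
        (add_le_add (add_le_add h1 h2) h3)
    refine habc.trans (le_of_eq ?_)
    simp only [hcdef, hKdef]
    ring
  have hineq : ∀ s ∈ Set.Icc t T, g s ≤ A + ∫ r in s..T, K * g r := by
    intro s hs
    have hsT : s ≤ T := hs.2
    have hs0 : (0 : ℝ) ≤ s := ht0.trans hs.1
    have hKg_cont : ContinuousOn (fun r => K * g r) (Set.Icc s T) :=
      continuousOn_const.mul (hgc.mono (Set.Icc_subset_Icc hs.1 le_rfl))
    have hKg_int : IntervalIntegrable (fun r => K * g r) volume s T := by
      apply ContinuousOn.intervalIntegrable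
      rwa [Set.uIcc_of_le hsT]
    have hcKg_int : IntervalIntegrable (fun r => c + K * g r) volume s T :=
      intervalIntegrable_const.add hKg_int
    have hper : ∀ i : Fin S, |v s u i| ≤ A + ∫ r in s..T, K * g r := by
      intro i
      rw [hval i s hs]
      have e1 : |D.Psi (Zu u) (μ T u) i + ∫ r in s..T, E1rhs D μ v u i r|
          ≤ Psimax + ∫ r in s..T, |E1rhs D μ v u i r| := by
        refine (abs_add_le _ _).trans (add_le_add ?_ ?_)
        · exact H.Psi_bdd (Zu u) (Zu_le u) _ (hμ.1 T u (hmem T ⟨htT, le_rfl⟩)) i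
        · have h8 := intervalIntegral.norm_integral_le_integral_norm
            (f := E1rhs D μ v u i) (μ := volume) hsT
          simpa [Real.norm_eq_abs] using h8
      refine e1.trans ?_
      have e2 : ∫ r in s..T, |E1rhs D μ v u i r| ≤ ∫ r in s..T, (c + K * g r) := by
        apply intervalIntegral.integral_mono_on hsT ((hint i s hs).abs) hcKg_int
        intro r hr
        exact hfb i r ⟨hs.1.trans hr.1, hr.2⟩
      have e3 : ∫ r in s..T, (c + K * g r) = c * (T - s) + ∫ r in s..T, K * g r := by
        rw [intervalIntegral.integral_add intervalIntegrable_const hKg_int,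
          intervalIntegral.integral_const]
        simp [smul_eq_mul, mul_comm]
      have e4 : c * (T - s) ≤ c * T := by
        apply mul_le_mul_of_nonneg_left _ hc0
        linarith
      have e5 : Psimax + (∫ r in s..T, (c + K * g r)) ≤ A + ∫ r in s..T, K * g r := by
        rw [e3]
        simp only [hAdef, hcdef]
        have : (psimax + lammax * B) * (T - s) ≤ (psimax + lammax * B) * T := e4
        linarith
      linarith [e2]
    have hrhs0 : 0 ≤ A + ∫ r in s..T, K * g r :=
      add_nonneg hA0 (intervalIntegral.integral_nonneg hsT
        (fun r _ => mul_nonneg hK0 (hg0 r)))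
    exact (pi_norm_le_iff_of_nonneg hrhs0).2 (fun i => by
      rw [Real.norm_eq_abs]; exact hper i)
  have hgr := gronwall_back htT hK0 hgc hineq
  calc ‖v t u‖ = g t := rfl
    _ ≤ A * Real.exp (K * (T - t)) := hgr
    _ ≤ A * Real.exp (K * T) := by
        apply mul_le_mul_of_nonneg_left _ hA0
        apply Real.exp_le_exp.2
        have : K * (T - t) ≤ K * T := by nlinarith
        exact this

end MFGShocks

namespace MFGShocks

/-- **A priori bound depending on the number of shocks** (inside Lemma B.2).
If `μ ∈ M` and `v` is a regular solution of (E1) and (E3) given `μ`, then for all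
`(t,u) ∈ TS`,
`‖v(t,u)‖ ≤ (Ψmax + ψmax T) e^{(Qmax+λmax)T} Σ_{i=0}^{n−Z(u)} (e^{(Qmax+λmax)T} λmax T)^i`. -/
theorem backward_apriori_bound (S n : ℕ) (T : ℝ) (D : Model S n)
    (Lpsi LQ LPsi Llam Psimax psimax Qmax lammax : ℝ) (Jmax : ℕ)
    (H : Hyps S n T D Lpsi LQ LPsi Llam Psimax psimax Qmax lammax Jmax)
    (μ : ℝ → (Fin n → ℝ) → Fin S → ℝ) (hμ : MemM S n T Qmax μ)
    (v : ℝ → (Fin n → ℝ) → Fin S → ℝ)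
    (hreg : Regular S n T v) (hsol : SolBackward S n T D μ v) :
    ∀ t u, memTS n T t u →
      ‖v t u‖ ≤ (Psimax + psimax * T) * Real.exp ((Qmax + lammax) * T) *
        ∑ i ∈ Finset.range (n - Zu u + 1),
          (Real.exp ((Qmax + lammax) * T) * lammax * T) ^ i := by
  have i0 : Fin S := ⟨0, H.hS⟩
  have hu0U : memU n T (fun _ => (-1 : ℝ)) :=
    ⟨0, Nat.zero_le n, fun i hi => absurd hi (Nat.not_lt_zero _),
      fun i j hj _ => absurd hj (Nat.not_lt_zero _), fun i _ => rfl⟩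
  have hmem0 : memTS n T 0 (fun _ => (-1 : ℝ)) :=
    ⟨hu0U, ⟨le_rfl, H.hT.le⟩, fun i => by norm_num⟩
  have hpsi0 : 0 ≤ psimax :=
    (abs_nonneg _).trans (H.psi_bdd 0 _ D.m0 (fun _ => 0) hmem0 H.hm0 i0)
  have hPsi0 : 0 ≤ Psimax :=
    (abs_nonneg _).trans (H.Psi_bdd 0 (Nat.zero_le n) D.m0 H.hm0 i0)
  have hQ0 : 0 ≤ Qmax :=
    le_trans (Finset.sum_nonneg fun j _ => abs_nonneg _)
      (H.Q_bdd 0 _ D.m0 (fun _ => 0) hmem0 H.hm0 i0)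
  have hlam0 : 0 ≤ lammax :=
    le_trans (H.lam_pos 1 le_rfl H.hn 0 ⟨le_rfl, H.hT.le⟩ D.m0 H.hm0).le
      (H.lam_bdd 1 le_rfl H.hn 0 ⟨le_rfl, H.hT.le⟩ D.m0 H.hm0)
  set C : ℝ := (Psimax + psimax * T) * Real.exp ((Qmax + lammax) * T) with hC
  set a : ℝ := Real.exp ((Qmax + lammax) * T) * lammax * T with ha
  have hC0 : 0 ≤ C :=
    mul_nonneg (add_nonneg hPsi0 (mul_nonneg hpsi0 H.hT.le)) (Real.exp_pos _).le
  have ha0 : 0 ≤ a := mul_nonneg (mul_nonneg (Real.exp_pos _).le hlam0) H.hT.le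
  suffices Hk : ∀ k : ℕ, ∀ u t, memTS n T t u → n - Zu u = k →
      ‖v t u‖ ≤ C * ∑ i ∈ Finset.range (k + 1), a ^ i by
    intro t u hts
    exact Hk (n - Zu u) u t hts rfl
  intro k
  induction k with
  | zero =>
    intro u t hts hk
    have hZ : ¬ Zu u < n := by
      have := Zu_le u
      omega
    have hstep := step_bound S n T D Lpsi LQ LPsi Llam Psimax psimax Qmax lammax Jmax
      H μ hμ v hsol hpsi0 hPsi0 hQ0 hlam0 u t hts 0 le_rfl (fun h => absurd h hZ)
    refine hstep.trans (le_of_eq ?_)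
    rw [Finset.sum_range_one, pow_zero, mul_one, hC]
    ring
  | succ k ih =>
    intro u t hts hk
    have hZ : Zu u < n := by omega
    set B : ℝ := C * ∑ i ∈ Finset.range (k + 1), a ^ i with hB
    have hB0 : 0 ≤ B :=
      mul_nonneg hC0 (Finset.sum_nonneg fun i _ => pow_nonneg ha0 i)
    have hpush : Zu u < n → ∀ s, t ≤ s → s ≤ T → ‖v s (push u s)‖ ≤ B := by
      intro h s hts' hsT
      obtain ⟨hmemp, hZp⟩ := memTS_push hts h hts' hsT
      exact ih (push u s) s hmemp (by omega)
    have hstep := step_bound S n T D Lpsi LQ LPsi Llam Psimax psimax Qmax lammax Jmax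
      H μ hμ v hsol hpsi0 hPsi0 hQ0 hlam0 u t hts B hB0 hpush
    refine hstep.trans (le_of_eq ?_)
    rw [geom_sum_succ]
    simp only [hB, hC, ha]
    ring


end MFGShocks
end
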